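/- arXiv:2310.08473 — 2 statements merged into one kernel-verified Lean document; each statement's English description precedes it below -/
import Mathlib

section
/- Quantum minimax theorem (characterization of equilibria): Let R be a Hermitian matrix indexed by (Fin n × Fin m) × (Fin n × Fin m) and let v = sup_ρ inf_σ Tr(R(ρ⊗σ)) over density matrices ρ on ℂ^n and σ on ℂ^m. Then a pair (ρ*, σ*) of density matrices is a quantum Nash equilibrium of the game (meaning Tr(R(ρ⊗σ*)) ≤ Tr(R(ρ*⊗σ*)) for all density matrices ρ on ℂ^n and Tr(R(ρ*⊗σ)) ≥ Tr(R(ρ*⊗σ*)) for all density matrices σ on ℂ^m) if and only if Tr_A(R(ρ*⊗I_m)) − v·I_m is positive semidefinite and v·I_n − Tr_B(R(I_n⊗σ*)) is positive semidefinite. Moreover every quantum Nash equilibrium attains the value: Tr(R(ρ*⊗σ*)) = v. -/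
open Matrix Kronecker
open scoped ComplexOrder

/-- A density matrix: positive semidefinite with trace 1. -/
def IsDensity {d : Type*} [Fintype d] (ρ : Matrix d d ℂ) : Prop :=
  ρ.PosSemidef ∧ ρ.trace = 1

/-- Alice's payoff in the two-player quantum zero-sum game with payoff observable `R`. -/
noncomputable def payoff {n m : ℕ} (R : Matrix (Fin n × Fin m) (Fin n × Fin m) ℂ)
    (ρ : Matrix (Fin n) (Fin n) ℂ) (σ : Matrix (Fin m) (Fin m) ℂ) : ℝ :=
  ((R * (ρ ⊗ₖ σ)).trace).re

/-- Partial trace over the first (n-dimensional) register. -/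
noncomputable def trA {n m : ℕ} (M : Matrix (Fin n × Fin m) (Fin n × Fin m) ℂ) :
    Matrix (Fin m) (Fin m) ℂ :=
  fun b b' => ∑ a, M (a, b) (a, b')

/-- Partial trace over the second (m-dimensional) register. -/
noncomputable def trB {n m : ℕ} (M : Matrix (Fin n × Fin m) (Fin n × Fin m) ℂ) :
    Matrix (Fin n) (Fin n) ℂ :=
  fun a a' => ∑ b, M (a, b) (a', b)

/-- The value of the game: sup over density matrices ρ of the inf over density matrices σ. -/
noncomputable def gameValue {n m : ℕ} (R : Matrix (Fin n × Fin m) (Fin n × Fin m) ℂ) : ℝ :=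
  sSup {x : ℝ | ∃ ρ, IsDensity ρ ∧ x = sInf {y : ℝ | ∃ σ, IsDensity σ ∧ y = payoff R ρ σ}}

section AuxQMM

variable {k : ℕ}

lemma posSemidef_iff_eq_transpose_mul_self {A : Matrix (Fin k) (Fin k) ℂ} :
    A.PosSemidef ↔ ∃ B : Matrix (Fin k) (Fin k) ℂ, A = Bᴴ * B := by
  open scoped MatrixOrder Matrix.Norms.L2Operator in
  exact ⟨fun h => CStarAlgebra.nonneg_iff_eq_star_mul_self.mp h.nonneg,
    fun ⟨B, hB⟩ => hB ▸ posSemidef_conjTranspose_mul_self B⟩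

lemma psd_diag_nonneg {M : Matrix (Fin k) (Fin k) ℂ} (hM : M.PosSemidef) (i : Fin k) :
    0 ≤ M i i := by
  have := hM.dotProduct_mulVec_nonneg (Pi.single i 1)
  simpa [dotProduct, mulVec, Pi.single_apply, Finset.mul_sum] using this

lemma psd_trace_nonneg {M : Matrix (Fin k) (Fin k) ℂ} (hM : M.PosSemidef) :
    0 ≤ M.trace := by
  rw [Matrix.trace]
  exact Finset.sum_nonneg fun i _ => psd_diag_nonneg hM i

lemma trace_mul_psd_nonneg {A B : Matrix (Fin k) (Fin k) ℂ}
    (hA : A.PosSemidef) (hB : B.PosSemidef) : 0 ≤ (A * B).trace := by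
  obtain ⟨C, rfl⟩ := posSemidef_iff_eq_transpose_mul_self.mp hB
  have h : (A * (Cᴴ * C)).trace = (C * A * Cᴴ).trace := by
    rw [← Matrix.mul_assoc, Matrix.trace_mul_cycle]
  rw [h]
  exact psd_trace_nonneg (hA.mul_mul_conjTranspose_same C)

lemma real_smul_one_herm (c : ℝ) :
    ((c : ℂ) • (1 : Matrix (Fin k) (Fin k) ℂ)).IsHermitian := by
  unfold Matrix.IsHermitian
  rw [conjTranspose_smul, conjTranspose_one]
  simp [Complex.star_def, Complex.conj_ofReal]

lemma psd_real_smul {M : Matrix (Fin k) (Fin k) ℂ} (hM : M.PosSemidef) {c : ℝ} (hc : 0 ≤ c) :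
    ((c : ℂ) • M).PosSemidef := by
  refine .of_dotProduct_mulVec_nonneg ?_ fun x => ?_
  · unfold Matrix.IsHermitian
    rw [conjTranspose_smul, hM.1.eq]
    simp [Complex.star_def, Complex.conj_ofReal]
  · rw [smul_mulVec, dotProduct_smul]
    have : (0:ℂ) ≤ (c:ℂ) := by exact_mod_cast hc
    simpa using mul_nonneg this (hM.dotProduct_mulVec_nonneg x)

lemma herm_quad_star {M : Matrix (Fin k) (Fin k) ℂ} (hM : M.IsHermitian) (x : Fin k → ℂ) :
    star (star x ⬝ᵥ M *ᵥ x) = star x ⬝ᵥ M *ᵥ x := by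
  have happ : ∀ i j, star (M i j) = M j i := fun i j => by
    conv_lhs => rw [← hM.eq]
    simp [conjTranspose_apply]
  simp only [dotProduct, Matrix.mulVec, star_sum, star_mul', Pi.star_apply, star_star,
    Finset.mul_sum, dotProduct]
  rw [Finset.sum_comm]
  refine Finset.sum_congr rfl fun i _ => Finset.sum_congr rfl fun j _ => ?_
  rw [happ]
  ring

lemma vecMulVec_psd (x : Fin k → ℂ) :
    (Matrix.vecMulVec x (star x)).PosSemidef := by
  rw [vecMulVec_eq Unit]
  rw [show Matrix.replicateRow Unit (star x) = (Matrix.replicateCol Unit x)ᴴ by simp [Matrix.conjTranspose_replicateCol]]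
  exact posSemidef_self_mul_conjTranspose _

lemma trace_mul_vecMulVec {M : Matrix (Fin k) (Fin k) ℂ} (x : Fin k → ℂ) :
    (M * Matrix.vecMulVec x (star x)).trace = star x ⬝ᵥ M *ᵥ x := by
  simp only [Matrix.trace, Matrix.diag, Matrix.mul_apply, Matrix.vecMulVec_apply,
    dotProduct, Matrix.mulVec, Pi.star_apply, Finset.mul_sum]
  exact Finset.sum_congr rfl fun i _ => Finset.sum_congr rfl fun j _ => by ring

lemma key {M : Matrix (Fin k) (Fin k) ℂ} (hM : M.IsHermitian) (c : ℝ) :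
    (∀ σ : Matrix (Fin k) (Fin k) ℂ, IsDensity σ → c ≤ ((M * σ).trace).re) ↔
      (M - (c : ℂ) • 1).PosSemidef := by
  constructor
  · intro h
    refine .of_dotProduct_mulVec_nonneg (hM.sub (real_smul_one_herm c)) fun x => ?_
    by_cases hx : x = 0
    · simp [hx]
    set s : ℝ := ∑ i, Complex.normSq (x i) with hs
    have hs0 : 0 < s := by
      obtain ⟨i, hi⟩ := Function.ne_iff.mp hx
      exact Finset.sum_pos' (fun j _ => Complex.normSq_nonneg _)
        ⟨i, Finset.mem_univ i, Complex.normSq_pos.mpr hi⟩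
    have hsx : star x ⬝ᵥ x = (s : ℂ) := by
      simp only [dotProduct, Pi.star_apply, hs]
      push_cast
      exact Finset.sum_congr rfl fun i _ => (Complex.normSq_eq_conj_mul_self).symm
    set σ : Matrix (Fin k) (Fin k) ℂ := ((s⁻¹ : ℝ) : ℂ) • Matrix.vecMulVec x (star x) with hσ
    have hσd : IsDensity σ := by
      refine ⟨psd_real_smul (vecMulVec_psd x) (inv_nonneg.mpr hs0.le), ?_⟩
      rw [hσ, Matrix.trace_smul]
      have : (Matrix.vecMulVec x (star x)).trace = (s : ℂ) := by
        rw [← hsx]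
        simp only [Matrix.trace, Matrix.diag, Matrix.vecMulVec_apply, dotProduct, Pi.star_apply]
        exact Finset.sum_congr rfl fun i _ => by ring
      rw [this, smul_eq_mul]
      rw [← Complex.ofReal_mul, inv_mul_cancel₀ hs0.ne']
      norm_num
    have hc := h σ hσd
    have htr : (M * σ).trace = ((s⁻¹ : ℝ) : ℂ) * (star x ⬝ᵥ M *ᵥ x) := by
      rw [hσ, Matrix.mul_smul, Matrix.trace_smul, trace_mul_vecMulVec, smul_eq_mul]
    set z : ℂ := star x ⬝ᵥ M *ᵥ x with hz
    have hzim : z.im = 0 := by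
      have := herm_quad_star hM x
      rw [← hz] at this
      have h2 := congrArg Complex.im this
      simp only [Complex.star_def, Complex.conj_im] at h2
      linarith
    have hre : c ≤ s⁻¹ * z.re := by
      rw [htr] at hc
      simpa using hc
    have hzre : c * s ≤ z.re := by
      have h1 := mul_le_mul_of_nonneg_right hre hs0.le
      have h2 : s⁻¹ * z.re * s = z.re := by field_simp
      linarith
    have hgoal : star x ⬝ᵥ (M - (c : ℂ) • 1) *ᵥ x = z - (c : ℂ) * (s : ℂ) := by
      rw [Matrix.sub_mulVec, dotProduct_sub, smul_mulVec, Matrix.one_mulVec,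
        dotProduct_smul, hsx, smul_eq_mul]
    rw [hgoal, Complex.le_def]
    constructor
    · simp only [Complex.zero_re, Complex.sub_re]
      simp only [Complex.mul_re, Complex.ofReal_re, Complex.ofReal_im, mul_zero, sub_zero]
      nlinarith [hzre]
    · simp [hzim]
  · intro hpsd σ hσ
    have h0 : 0 ≤ ((M - (c : ℂ) • 1) * σ).trace := trace_mul_psd_nonneg hpsd hσ.1
    have heq : ((M - (c : ℂ) • 1) * σ).trace = (M * σ).trace - (c : ℂ) := by
      rw [Matrix.sub_mul, Matrix.trace_sub, Matrix.smul_mul, Matrix.one_mul,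
        Matrix.trace_smul, hσ.2, smul_eq_mul, mul_one]
    rw [heq, Complex.le_def] at h0
    have := h0.1
    simp only [Complex.zero_re, Complex.sub_re, Complex.ofReal_re] at this
    linarith

lemma key' {M : Matrix (Fin k) (Fin k) ℂ} (hM : M.IsHermitian) (c : ℝ) :
    (∀ ρ : Matrix (Fin k) (Fin k) ℂ, IsDensity ρ → ((M * ρ).trace).re ≤ c) ↔
      ((c : ℂ) • 1 - M).PosSemidef := by
  have h := key (M := -M) hM.neg (-c)
  have e : (-M - (((-c : ℝ)) : ℂ) • 1) = (c : ℂ) • 1 - M := by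
    rw [Complex.ofReal_neg, neg_smul, sub_neg_eq_add]
    abel
  rw [e] at h
  rw [← h]
  constructor
  · intro h2 ρ hρ
    have h3 := h2 ρ hρ
    rw [Matrix.neg_mul, Matrix.trace_neg, Complex.neg_re]
    linarith
  · intro h2 ρ hρ
    have h3 := h2 ρ hρ
    rw [Matrix.neg_mul, Matrix.trace_neg, Complex.neg_re] at h3
    linarith

lemma density_entry_norm_le {σ : Matrix (Fin k) (Fin k) ℂ} (h : IsDensity σ) (i j : Fin k) :
    ‖σ i j‖ ≤ 1 := by
  obtain ⟨hpsd, htr⟩ := h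
  obtain ⟨B, rfl⟩ := posSemidef_iff_eq_transpose_mul_self.mp hpsd
  set f : Fin k → ℝ := fun i => ∑ l, Complex.normSq (B l i) with hf
  have hdiag : ∀ i, (Bᴴ * B) i i = (f i : ℂ) := by
    intro i
    simp only [Matrix.mul_apply, conjTranspose_apply, hf]
    push_cast
    exact Finset.sum_congr rfl fun l _ => by
      rw [Complex.normSq_eq_conj_mul_self]; rfl
  have hf1 : ∀ i, f i ≤ 1 := by
    intro i
    have hsum : ∑ l, f l = 1 := by
      have : (Bᴴ * B).trace = ((∑ l, f l : ℝ) : ℂ) := by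
        rw [Matrix.trace]
        push_cast
        exact Finset.sum_congr rfl fun l _ => hdiag l
      rw [htr] at this
      exact_mod_cast this.symm
    calc f i ≤ ∑ l, f l := Finset.single_le_sum
          (f := f) (fun l _ => Finset.sum_nonneg fun t _ => Complex.normSq_nonneg _)
          (Finset.mem_univ i)
    _ = 1 := hsum
  have hentry : ‖(Bᴴ * B) i j‖ ≤ ∑ l, ‖B l i‖ * ‖B l j‖ := by
    rw [Matrix.mul_apply]
    refine (norm_sum_le _ _).trans ?_
    refine Finset.sum_le_sum fun l _ => ?_
    rw [conjTranspose_apply, norm_mul, norm_star]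
  have hcs : (∑ l, ‖B l i‖ * ‖B l j‖) ^ 2 ≤ f i * f j := by
    refine (Finset.sum_mul_sq_le_sq_mul_sq _ _ _).trans ?_
    have e1 : ∑ l, ‖B l i‖ ^ 2 = f i := Finset.sum_congr rfl fun l _ => by
      rw [← Complex.sq_norm]
    have e2 : ∑ l, ‖B l j‖ ^ 2 = f j := Finset.sum_congr rfl fun l _ => by
      rw [← Complex.sq_norm]
    rw [e1, e2]
  have h1 : (∑ l, ‖B l i‖ * ‖B l j‖) ^ 2 ≤ 1 := by
    refine hcs.trans ?_
    have h0i : 0 ≤ f i := Finset.sum_nonneg fun t _ => Complex.normSq_nonneg _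
    have h0j : 0 ≤ f j := Finset.sum_nonneg fun t _ => Complex.normSq_nonneg _
    nlinarith [hf1 i, hf1 j]
  have h2 : ∑ l, ‖B l i‖ * ‖B l j‖ ≤ 1 := by
    nlinarith [Finset.sum_nonneg
      (fun l (_ : l ∈ Finset.univ) => mul_nonneg (norm_nonneg (B l i)) (norm_nonneg (B l j)))]
  exact hentry.trans h2

end AuxQMM

section AuxQMM2

variable {n m : ℕ}

lemma trace_eq_trA (R : Matrix (Fin n × Fin m) (Fin n × Fin m) ℂ)
    (ρ : Matrix (Fin n) (Fin n) ℂ) (σ : Matrix (Fin m) (Fin m) ℂ) :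
    (R * (ρ ⊗ₖ σ)).trace
      = (trA (R * (ρ ⊗ₖ (1 : Matrix (Fin m) (Fin m) ℂ))) * σ).trace := by
  simp only [Matrix.trace, Matrix.diag, Matrix.mul_apply, trA, kroneckerMap_apply,
    Matrix.one_apply, Fintype.sum_prod_type, mul_ite, mul_one, mul_zero,
    Finset.sum_ite_eq', Finset.mem_univ, if_true, Finset.sum_mul, Finset.mul_sum]
  rw [Finset.sum_comm]
  refine Finset.sum_congr rfl fun b _ => ?_
  conv_lhs => enter [2, a]; rw [Finset.sum_comm]
  rw [Finset.sum_comm]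
  refine Finset.sum_congr rfl fun b' _ => Finset.sum_congr rfl fun a _ =>
    Finset.sum_congr rfl fun a' _ => by ring

lemma trace_eq_trB (R : Matrix (Fin n × Fin m) (Fin n × Fin m) ℂ)
    (ρ : Matrix (Fin n) (Fin n) ℂ) (σ : Matrix (Fin m) (Fin m) ℂ) :
    (R * (ρ ⊗ₖ σ)).trace
      = (trB (R * ((1 : Matrix (Fin n) (Fin n) ℂ) ⊗ₖ σ)) * ρ).trace := by
  simp only [Matrix.trace, Matrix.diag, Matrix.mul_apply, trB, kroneckerMap_apply,
    Matrix.one_apply, Fintype.sum_prod_type, ite_mul, one_mul, zero_mul, mul_ite, mul_zero,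
    Finset.sum_ite_irrel, Finset.sum_const_zero,
    Finset.sum_ite_eq', Finset.mem_univ, if_true, Finset.sum_mul, Finset.mul_sum]
  refine Finset.sum_congr rfl fun a _ => ?_
  rw [Finset.sum_comm]
  refine Finset.sum_congr rfl fun a' _ => Finset.sum_congr rfl fun b _ =>
    Finset.sum_congr rfl fun b' _ => by ring

lemma herm_apply {p : Type*} [Fintype p] {A : Matrix p p ℂ} (hA : A.IsHermitian) (i j : p) :
    star (A i j) = A j i := by
  conv_lhs => rw [← hA.eq]
  simp [conjTranspose_apply]

lemma trA_apply (R : Matrix (Fin n × Fin m) (Fin n × Fin m) ℂ)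
    (ρ : Matrix (Fin n) (Fin n) ℂ) (b b' : Fin m) :
    trA (R * (ρ ⊗ₖ (1 : Matrix (Fin m) (Fin m) ℂ))) b b'
      = ∑ a, ∑ a', R (a, b) (a', b') * ρ a' a := by
  simp only [trA, Matrix.mul_apply, kroneckerMap_apply, Matrix.one_apply,
    Fintype.sum_prod_type, mul_ite, mul_one, mul_zero,
    Finset.sum_ite_eq', Finset.mem_univ, if_true]

lemma trB_apply (R : Matrix (Fin n × Fin m) (Fin n × Fin m) ℂ)
    (σ : Matrix (Fin m) (Fin m) ℂ) (a a' : Fin n) :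
    trB (R * ((1 : Matrix (Fin n) (Fin n) ℂ) ⊗ₖ σ)) a a'
      = ∑ b, ∑ b', R (a, b) (a', b') * σ b' b := by
  simp only [trB, Matrix.mul_apply, kroneckerMap_apply, Matrix.one_apply,
    Fintype.sum_prod_type, ite_mul, one_mul, zero_mul, mul_ite, mul_zero,
    Finset.sum_ite_irrel, Finset.sum_const_zero,
    Finset.sum_ite_eq', Finset.mem_univ, if_true]

lemma trA_herm {R : Matrix (Fin n × Fin m) (Fin n × Fin m) ℂ} (hR : R.IsHermitian)
    {ρ : Matrix (Fin n) (Fin n) ℂ} (hρ : ρ.IsHermitian) :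
    (trA (R * (ρ ⊗ₖ (1 : Matrix (Fin m) (Fin m) ℂ)))).IsHermitian := by
  refine Matrix.ext fun b b' => ?_
  rw [conjTranspose_apply, trA_apply, trA_apply, star_sum]
  rw [Finset.sum_comm]
  refine Finset.sum_congr rfl fun a _ => ?_
  rw [star_sum]
  refine Finset.sum_congr rfl fun a' _ => ?_
  rw [star_mul', herm_apply hR, herm_apply hρ]

lemma trB_herm {R : Matrix (Fin n × Fin m) (Fin n × Fin m) ℂ} (hR : R.IsHermitian)
    {σ : Matrix (Fin m) (Fin m) ℂ} (hσ : σ.IsHermitian) :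
    (trB (R * ((1 : Matrix (Fin n) (Fin n) ℂ) ⊗ₖ σ))).IsHermitian := by
  refine Matrix.ext fun a a' => ?_
  rw [conjTranspose_apply, trB_apply, trB_apply, star_sum]
  rw [Finset.sum_comm]
  refine Finset.sum_congr rfl fun b _ => ?_
  rw [star_sum]
  refine Finset.sum_congr rfl fun b' _ => ?_
  rw [star_mul', herm_apply hR, herm_apply hσ]

lemma payoff_abs_le (R : Matrix (Fin n × Fin m) (Fin n × Fin m) ℂ)
    {ρ : Matrix (Fin n) (Fin n) ℂ} {σ : Matrix (Fin m) (Fin m) ℂ}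
    (hρ : IsDensity ρ) (hσ : IsDensity σ) :
    |payoff R ρ σ| ≤ ∑ i : Fin n × Fin m, ∑ j : Fin n × Fin m, ‖R i j‖ := by
  have h1 : |payoff R ρ σ| ≤ ‖(R * (ρ ⊗ₖ σ)).trace‖ := by
    rw [payoff]
    exact Complex.abs_re_le_norm _
  refine h1.trans ?_
  rw [Matrix.trace]
  refine (norm_sum_le _ _).trans ?_
  refine Finset.sum_le_sum fun i _ => ?_
  rw [Matrix.diag, Matrix.mul_apply]
  refine (norm_sum_le _ _).trans ?_
  refine Finset.sum_le_sum fun j _ => ?_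
  rw [norm_mul]
  have hx : ‖(ρ ⊗ₖ σ) j i‖ ≤ 1 := by
    obtain ⟨j1, j2⟩ := j
    obtain ⟨i1, i2⟩ := i
    rw [kroneckerMap_apply, norm_mul]
    have := density_entry_norm_le hρ j1 i1
    have := density_entry_norm_le hσ j2 i2
    nlinarith [norm_nonneg (ρ j1 i1), norm_nonneg (σ j2 i2)]
  nlinarith [norm_nonneg (R i j), norm_nonneg ((ρ ⊗ₖ σ) j i)]

end AuxQMM2

/-- Quantum minimax theorem (characterization of equilibria). -/
theorem stmt_1 {n m : ℕ}
    (R : Matrix (Fin n × Fin m) (Fin n × Fin m) ℂ) (hR : R.IsHermitian)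
    (ρs : Matrix (Fin n) (Fin n) ℂ) (σs : Matrix (Fin m) (Fin m) ℂ)
    (hρs : IsDensity ρs) (hσs : IsDensity σs) :
    (((∀ ρ, IsDensity ρ → payoff R ρ σs ≤ payoff R ρs σs) ∧
      (∀ σ, IsDensity σ → payoff R ρs σs ≤ payoff R ρs σ)) ↔
      ((trA (R * (ρs ⊗ₖ (1 : Matrix (Fin m) (Fin m) ℂ)))
          - ((gameValue R : ℂ) • (1 : Matrix (Fin m) (Fin m) ℂ))).PosSemidef ∧
        (((gameValue R : ℂ) • (1 : Matrix (Fin n) (Fin n) ℂ))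
          - trB (R * ((1 : Matrix (Fin n) (Fin n) ℂ) ⊗ₖ σs))).PosSemidef))
    ∧ (((∀ ρ, IsDensity ρ → payoff R ρ σs ≤ payoff R ρs σs) ∧
        (∀ σ, IsDensity σ → payoff R ρs σs ≤ payoff R ρs σ)) →
        payoff R ρs σs = gameValue R) := by
  have hM₁ : (trA (R * (ρs ⊗ₖ (1 : Matrix (Fin m) (Fin m) ℂ)))).IsHermitian :=
    trA_herm hR hρs.1.1
  have hM₂ : (trB (R * ((1 : Matrix (Fin n) (Fin n) ℂ) ⊗ₖ σs))).IsHermitian :=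
    trB_herm hR hσs.1.1
  have hpay1 : ∀ σ, payoff R ρs σ
      = (((trA (R * (ρs ⊗ₖ (1 : Matrix (Fin m) (Fin m) ℂ)))) * σ).trace).re := fun σ => by
    rw [payoff, trace_eq_trA]
  have hpay2 : ∀ ρ, payoff R ρ σs
      = (((trB (R * ((1 : Matrix (Fin n) (Fin n) ℂ) ⊗ₖ σs))) * ρ).trace).re := fun ρ => by
    rw [payoff, trace_eq_trB]
  have keyB : ∀ c : ℝ, (∀ σ, IsDensity σ → c ≤ payoff R ρs σ) ↔
      (trA (R * (ρs ⊗ₖ (1 : Matrix (Fin m) (Fin m) ℂ))) - (c : ℂ) • 1).PosSemidef := by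
    intro c
    rw [← key hM₁ c]
    constructor
    · intro h σ hσ; rw [← hpay1 σ]; exact h σ hσ
    · intro h σ hσ; rw [hpay1 σ]; exact h σ hσ
  have keyA : ∀ c : ℝ, (∀ ρ, IsDensity ρ → payoff R ρ σs ≤ c) ↔
      ((c : ℂ) • 1 - trB (R * ((1 : Matrix (Fin n) (Fin n) ℂ) ⊗ₖ σs))).PosSemidef := by
    intro c
    rw [← key' hM₂ c]
    constructor
    · intro h ρ hρ; rw [← hpay2 ρ]; exact h ρ hρ
    · intro h ρ hρ; rw [hpay2 ρ]; exact h ρ hρ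
  have nash_val : ((∀ ρ, IsDensity ρ → payoff R ρ σs ≤ payoff R ρs σs) ∧
      (∀ σ, IsDensity σ → payoff R ρs σs ≤ payoff R ρs σ)) →
      payoff R ρs σs = gameValue R := by
    rintro ⟨hA, hB⟩
    set p := payoff R ρs σs with hp
    have hmemts : p ∈ {y : ℝ | ∃ σ, IsDensity σ ∧ y = payoff R ρs σ} := ⟨σs, hσs, rfl⟩
    have hlbts : ∀ y ∈ {y : ℝ | ∃ σ, IsDensity σ ∧ y = payoff R ρs σ}, p ≤ y := by
      rintro y ⟨σ, hσ, rfl⟩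
      exact hB σ hσ
    have hinf : sInf {y : ℝ | ∃ σ, IsDensity σ ∧ y = payoff R ρs σ} = p :=
      le_antisymm (csInf_le ⟨p, hlbts⟩ hmemts) (le_csInf ⟨p, hmemts⟩ hlbts)
    have hpS : p ∈ {x : ℝ | ∃ ρ, IsDensity ρ ∧
        x = sInf {y : ℝ | ∃ σ, IsDensity σ ∧ y = payoff R ρ σ}} := ⟨ρs, hρs, hinf.symm⟩
    have hub : ∀ x ∈ {x : ℝ | ∃ ρ, IsDensity ρ ∧
        x = sInf {y : ℝ | ∃ σ, IsDensity σ ∧ y = payoff R ρ σ}}, x ≤ p := by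
      rintro x ⟨ρ, hρ, rfl⟩
      have hbdd : BddBelow {y : ℝ | ∃ σ, IsDensity σ ∧ y = payoff R ρ σ} := by
        refine ⟨-(∑ i : Fin n × Fin m, ∑ j : Fin n × Fin m, ‖R i j‖), ?_⟩
        rintro y ⟨σ, hσ, rfl⟩
        have := (abs_le.mp (payoff_abs_le R hρ hσ)).1
        linarith
      calc sInf {y : ℝ | ∃ σ, IsDensity σ ∧ y = payoff R ρ σ}
          ≤ payoff R ρ σs := csInf_le hbdd ⟨σs, hσs, rfl⟩
        _ ≤ p := hA ρ hρ
    have : gameValue R = p := le_antisymm (csSup_le ⟨p, hpS⟩ hub) (le_csSup ⟨p, hub⟩ hpS)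
    exact this.symm
  refine ⟨?_, nash_val⟩
  constructor
  · rintro ⟨hA, hB⟩
    have hpv : payoff R ρs σs = gameValue R := nash_val ⟨hA, hB⟩
    constructor
    · exact (keyB (gameValue R)).mp fun σ hσ => by rw [← hpv]; exact hB σ hσ
    · exact (keyA (gameValue R)).mp fun ρ hρ => by rw [← hpv]; exact hA ρ hρ
  · rintro ⟨h1, h2⟩
    have hBv : ∀ σ, IsDensity σ → gameValue R ≤ payoff R ρs σ := (keyB (gameValue R)).mpr h1
    have hAv : ∀ ρ, IsDensity ρ → payoff R ρ σs ≤ gameValue R := (keyA (gameValue R)).mpr h2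
    have hpv : payoff R ρs σs = gameValue R :=
      le_antisymm (hAv ρs hρs) (hBv σs hσs)
    exact ⟨fun ρ hρ => (hAv ρ hρ).trans hpv.ge, fun σ hσ => hpv.le.trans (hBv σ hσ)⟩
end

section
/- No-regret learning converges to quantum Nash equilibria in polymatrix quantum zero-sum games (Theorem 5.4, finite-horizon form): Consider a polymatrix quantum game on k players with edge set E and edge utility tensors R_{ij}, with player utilities u_i(ρ) = Σ_{j:(i,j)∈E} Tr(R_{ij}·ρ_{ij}), and suppose the game is zero-sum: Σ_{i=1}^k u_i(ρ) = 0 for every joint density matrix ρ. Let ρ_i^t (t = 1,…,T) be density matrices on ℂ^{n_i} for each player i, write ρ^t = ⊗_i ρ_i^t, and suppose every player has time-averaged external regret at most ε: for every player i and every density matrix ρ_i' on ℂ^{n_i}, (1/T)·Σ_{t=1}^T u_i(ρ_i' ⊗ (⊗_{j≠i} ρ_j^t)) ≤ (1/T)·Σ_{t=1}^T u_i(ρ^t) + ε. Then, setting ρ̄_i = (1/T)·Σ_{t=1}^T ρ_i^t, the product profile ⊗_i ρ̄_i is a kε-approximate quantum Nash equilibrium: for every player i and every density matrix ρ_i' on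 ℂ^{n_i}, u_i(ρ_i' ⊗ (⊗_{j≠i} ρ̄_j)) ≤ u_i(⊗_j ρ̄_j) + kε. -/
open Matrix
open scoped ComplexOrder

/-- The two-player marginal `ρ_{ij}` of a joint matrix `ρ`. -/
noncomputable def marg2 {k : ℕ} {n : Fin k → ℕ} (i j : Fin k)
    (ρ : Matrix (∀ l, Fin (n l)) (∀ l, Fin (n l)) ℂ) :
    Matrix (Fin (n i) × Fin (n j)) (Fin (n i) × Fin (n j)) ℂ :=
  fun ab a'b' => ∑ s : ∀ l, Fin (n l),
    if s i = ab.1 ∧ s j = ab.2 then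
      ρ s (Function.update (Function.update s i a'b'.1) j a'b'.2)
    else 0

/-- Player `i`'s polymatrix utility `u_i(ρ) = Σ_{j:(i,j)∈E} Tr(R_{ij}·ρ_{ij})`. -/
noncomputable def uPoly {k : ℕ} {n : Fin k → ℕ} (E : Finset (Fin k × Fin k))
    (R : ∀ i j : Fin k, Matrix (Fin (n i) × Fin (n j)) (Fin (n i) × Fin (n j)) ℂ)
    (i : Fin k) (ρ : Matrix (∀ l, Fin (n l)) (∀ l, Fin (n l)) ℂ) : ℝ :=
  (∑ j ∈ Finset.univ.filter (fun j => (i, j) ∈ E), (R i j * marg2 i j ρ).trace).re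

/-- The product profile `⊗ᵢ ρᵢ`. -/
noncomputable def prodProfile {k : ℕ} {n : Fin k → ℕ}
    (ρ : ∀ i, Matrix (Fin (n i)) (Fin (n i)) ℂ) :
    Matrix (∀ j, Fin (n j)) (∀ j, Fin (n j)) ℂ :=
  fun s s' => ∏ j, ρ j (s j) (s' j)

/- ### Auxiliary lemmas -/

lemma sum_prod_pi {k : ℕ} {n : Fin k → ℕ} (f : ∀ l, Fin (n l) → ℂ) :
    ∑ s : ∀ l, Fin (n l), ∏ l, f l (s l) = ∏ l, ∑ x, f l x := by
  classical
  have := Finset.prod_univ_sum (fun l => (Finset.univ : Finset (Fin (n l)))) f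
  rw [Fintype.piFinset_univ] at this
  exact this.symm

lemma trace_prodProfile {k : ℕ} {n : Fin k → ℕ}
    (σ : ∀ l, Matrix (Fin (n l)) (Fin (n l)) ℂ) :
    (prodProfile σ).trace = ∏ l, (σ l).trace := by
  simp only [Matrix.trace, Matrix.diag, prodProfile]
  exact sum_prod_pi (fun l x => σ l x x)

open scoped MatrixOrder in
lemma posSemidef_prodProfile {k : ℕ} {n : Fin k → ℕ}
    {σ : ∀ l, Matrix (Fin (n l)) (Fin (n l)) ℂ} (h : ∀ l, (σ l).PosSemidef) :
    (prodProfile σ).PosSemidef := by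
  classical
  set B : ∀ l, Matrix (Fin (n l)) (Fin (n l)) ℂ := fun l => CFC.sqrt (σ l) with hB
  have key : prodProfile σ = (prodProfile B)ᴴ * prodProfile B := by
    ext s s'
    rw [Matrix.mul_apply]
    simp only [Matrix.conjTranspose_apply, prodProfile]
    have hm : ∀ m : ∀ l, Fin (n l),
        star (∏ l, B l (m l) (s l)) * ∏ l, B l (m l) (s' l)
          = ∏ l, star (B l (m l) (s l)) * B l (m l) (s' l) := by
      intro m
      rw [star_prod, ← Finset.prod_mul_distrib]
    rw [Finset.sum_congr rfl fun m _ => hm m,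
      sum_prod_pi (fun l x => star (B l x (s l)) * B l x (s' l))]
    refine Finset.prod_congr rfl fun l _ => ?_
    have hσl : σ l = (B l)ᴴ * B l := by
      rw [hB]
      simp only
      rw [(CFC.sqrt_nonneg (σ l)).posSemidef.1.eq, CFC.sqrt_mul_sqrt_self (σ l) (h l).nonneg]
    rw [hσl, Matrix.mul_apply]
    simp [Matrix.conjTranspose_apply]
  rw [key]
  exact Matrix.posSemidef_conjTranspose_mul_self _

lemma isDensity_prodProfile {k : ℕ} {n : Fin k → ℕ}
    {σ : ∀ l, Matrix (Fin (n l)) (Fin (n l)) ℂ} (h : ∀ l, IsDensity (σ l)) :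
    IsDensity (prodProfile σ) := by
  refine ⟨posSemidef_prodProfile (fun l => (h l).1), ?_⟩
  rw [trace_prodProfile]
  simp [(fun l => (h l).2 : ∀ l, (σ l).trace = 1)]

lemma posSemidef_realSmul {d : Type*} [Fintype d] {A : Matrix d d ℂ}
    (hA : A.PosSemidef) {c : ℝ} (hc : 0 ≤ c) : ((c : ℂ) • A).PosSemidef := by
  constructor
  · show ((c : ℂ) • A)ᴴ = (c : ℂ) • A
    rw [Matrix.conjTranspose_smul, hA.1.eq]
    simp [Complex.conj_ofReal]
  · exact (hA.smul (Complex.zero_le_real.mpr hc)).2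

lemma marg2_prodProfile {k : ℕ} {n : Fin k → ℕ} (i j : Fin k) (hij : i ≠ j)
    (σ : ∀ l, Matrix (Fin (n l)) (Fin (n l)) ℂ) (hσ : ∀ l, (σ l).trace = 1) :
    marg2 i j (prodProfile σ) =
      Matrix.of fun ab a'b' => σ i ab.1 a'b'.1 * σ j ab.2 a'b'.2 := by
  classical
  funext ab a'b'
  obtain ⟨a, b⟩ := ab
  obtain ⟨a', b'⟩ := a'b'
  set h : ∀ l, Fin (n l) → ℂ :=
    Function.update (Function.update (fun l x => σ l x x) i
      (fun x => if x = a then σ i x a' else 0)) j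
      (fun x => if x = b then σ j x b' else 0) with hh
  have hhi : h i = fun x => if x = a then σ i x a' else 0 := by
    rw [hh, Function.update_of_ne hij, Function.update_self]
  have hhj : h j = fun x => if x = b then σ j x b' else 0 := by
    rw [hh, Function.update_self]
  have hho : ∀ l, l ≠ i → l ≠ j → h l = fun x => σ l x x := by
    intro l hli hlj
    rw [hh, Function.update_of_ne hlj, Function.update_of_ne hli]
  have hstep : ∀ s : ∀ l, Fin (n l),
      (if s i = a ∧ s j = b then
        prodProfile σ s (Function.update (Function.update s i a') j b') else 0)
      = ∏ l, h l (s l) := by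
    intro s
    by_cases hc : s i = a ∧ s j = b
    · rw [if_pos hc]
      unfold prodProfile
      refine Finset.prod_congr rfl fun l _ => ?_
      by_cases hlj : l = j
      · subst hlj
        rw [hhj, Function.update_self]
        simp [hc.2]
      · by_cases hli : l = i
        · subst hli
          rw [hhi, Function.update_of_ne hlj, Function.update_self]
          simp [hc.1]
        · rw [hho l hli hlj, Function.update_of_ne hlj, Function.update_of_ne hli]
    · rw [if_neg hc]
      rcases not_and_or.mp hc with h1 | h2
      · symm
        apply Finset.prod_eq_zero (Finset.mem_univ i)
        rw [hhi]
        simp [h1]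
      · symm
        apply Finset.prod_eq_zero (Finset.mem_univ j)
        rw [hhj]
        simp [h2]
  show (∑ s : ∀ l, Fin (n l), if s i = a ∧ s j = b then
        prodProfile σ s (Function.update (Function.update s i a') j b') else 0)
      = σ i a a' * σ j b b'
  rw [Finset.sum_congr rfl fun s _ => hstep s, sum_prod_pi h]
  have hval : ∀ l, (∑ x, h l x)
      = if l = i then σ i a a' else if l = j then σ j b b' else 1 := by
    intro l
    by_cases hli : l = i
    · subst hli
      rw [hhi, if_pos rfl]
      simp [Finset.sum_ite_eq']
    · by_cases hlj : l = j
      · subst hlj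
        rw [hhj, if_neg hli, if_pos rfl]
        simp [Finset.sum_ite_eq']
      · rw [hho l hli hlj, if_neg hli, if_neg hlj]
        exact hσ l
  rw [Finset.prod_congr rfl fun l _ => hval l]
  rw [← Finset.mul_prod_erase Finset.univ _ (Finset.mem_univ i)]
  rw [← Finset.mul_prod_erase (Finset.univ.erase i) _
    (Finset.mem_erase.mpr ⟨hij.symm, Finset.mem_univ j⟩)]
  rw [if_pos rfl, if_neg hij.symm, if_pos rfl]
  rw [Finset.prod_eq_one (by
    intro l hl
    simp only [Finset.mem_erase] at hl
    rw [if_neg hl.2.1, if_neg hl.1])]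
  ring

lemma uPoly_prodProfile {k : ℕ} {n : Fin k → ℕ} (E : Finset (Fin k × Fin k))
    (hE : ∀ p ∈ E, p.1 ≠ p.2)
    (R : ∀ i j : Fin k, Matrix (Fin (n i) × Fin (n j)) (Fin (n i) × Fin (n j)) ℂ)
    (i : Fin k) (σ : ∀ l, Matrix (Fin (n l)) (Fin (n l)) ℂ)
    (hσ : ∀ l, (σ l).trace = 1) :
    uPoly E R i (prodProfile σ) =
      ∑ j ∈ Finset.univ.filter (fun j => (i, j) ∈ E),
        ((R i j * Matrix.of (fun (ab a'b' : Fin (n i) × Fin (n j)) =>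
          σ i ab.1 a'b'.1 * σ j ab.2 a'b'.2)).trace).re := by
  unfold uPoly
  rw [Complex.re_sum]
  refine Finset.sum_congr rfl fun j hj => ?_
  have hij : i ≠ j := hE (i, j) (Finset.mem_filter.mp hj).2
  rw [marg2_prodProfile i j hij σ hσ]

lemma trace_kron_avg {d e : Type*} [Fintype d] [Fintype e]
    (Rm : Matrix (d × e) (d × e) ℂ) (A : Matrix d d ℂ) (T : ℕ)
    (B : Fin T → Matrix e e ℂ) :
    (Rm * Matrix.of (fun p q : d × e =>
        A p.1 q.1 * ((1 / (T : ℂ)) • ∑ t, B t) p.2 q.2)).trace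
      = (1 / (T : ℂ)) * ∑ t, (Rm * Matrix.of (fun p q : d × e =>
        A p.1 q.1 * B t p.2 q.2)).trace := by
  have hK : Matrix.of (fun p q : d × e =>
      A p.1 q.1 * ((1 / (T : ℂ)) • ∑ t, B t) p.2 q.2)
      = (1 / (T : ℂ)) • ∑ t, Matrix.of (fun p q : d × e =>
        A p.1 q.1 * B t p.2 q.2) := by
    ext p q
    simp only [Matrix.of_apply, Matrix.smul_apply, Matrix.sum_apply, smul_eq_mul]
    rw [← Finset.mul_sum]
    ring
  rw [hK, Matrix.mul_smul, Matrix.trace_smul, Matrix.mul_sum, Matrix.trace_sum,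
    smul_eq_mul]

/-- No-regret learning converges to quantum Nash equilibria in polymatrix quantum
zero-sum games (Theorem 5.4, finite-horizon form). -/
theorem stmt_9 {k : ℕ} {n : Fin k → ℕ} (E : Finset (Fin k × Fin k))
    (hE : ∀ p ∈ E, p.1 ≠ p.2)
    (R : ∀ i j : Fin k, Matrix (Fin (n i) × Fin (n j)) (Fin (n i) × Fin (n j)) ℂ)
    (hR : ∀ i j, (R i j).IsHermitian)
    (hzero : ∀ ρ : Matrix (∀ l, Fin (n l)) (∀ l, Fin (n l)) ℂ, IsDensity ρ →
      ∑ i, uPoly E R i ρ = 0)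
    (T : ℕ) (hT : 0 < T)
    (ρ : Fin T → ∀ i, Matrix (Fin (n i)) (Fin (n i)) ℂ)
    (hρ : ∀ t i, IsDensity (ρ t i))
    (ε : ℝ)
    (hreg : ∀ i, ∀ ρ' : Matrix (Fin (n i)) (Fin (n i)) ℂ, IsDensity ρ' →
      (1 / (T : ℝ)) * ∑ t, uPoly E R i (prodProfile (Function.update (ρ t) i ρ'))
        ≤ (1 / (T : ℝ)) * ∑ t, uPoly E R i (prodProfile (ρ t)) + ε) :
    ∀ i, ∀ ρ' : Matrix (Fin (n i)) (Fin (n i)) ℂ, IsDensity ρ' →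
      uPoly E R i (prodProfile
          (Function.update (fun l => (1 / (T : ℂ)) • ∑ t, ρ t l) i ρ'))
        ≤ uPoly E R i (prodProfile (fun l => (1 / (T : ℂ)) • ∑ t, ρ t l)) + k * ε := by
  classical
  intro i ρ' hρ'
  have hTR : (0 : ℝ) < (T : ℝ) := by exact_mod_cast hT
  have hTC : (T : ℂ) ≠ 0 := by exact_mod_cast hT.ne'
  have hcast : (1 / (T : ℂ)) = (((1 / (T : ℝ) : ℝ)) : ℂ) := by push_cast; ring
  set Rbar : ∀ l, Matrix (Fin (n l)) (Fin (n l)) ℂ :=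
    fun l => (1 / (T : ℂ)) • ∑ t, ρ t l with hRbar
  -- Rbar is a density matrix in every coordinate
  have hbar : ∀ l, IsDensity (Rbar l) := by
    intro l
    have hsum : ∀ s : Finset (Fin T), (∑ t ∈ s, ρ t l).PosSemidef := by
      intro s
      induction s using Finset.induction with
      | empty => simpa using (Matrix.PosSemidef.zero :
          (0 : Matrix (Fin (n l)) (Fin (n l)) ℂ).PosSemidef)
      | insert _ _ hx ih =>
        rw [Finset.sum_insert hx]
        exact ((hρ _ l).1).add ih
    constructor
    · show ((1 / (T : ℂ)) • ∑ t, ρ t l).PosSemidef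
      rw [hcast]
      exact posSemidef_realSmul (hsum _) (by positivity)
    · show ((1 / (T : ℂ)) • ∑ t, ρ t l).trace = 1
      rw [Matrix.trace_smul, Matrix.trace_sum,
        Finset.sum_congr rfl fun t _ => (hρ t l).2]
      simp only [Finset.sum_const, Finset.card_univ, Fintype.card_fin,
        nsmul_eq_mul, mul_one, smul_eq_mul, one_div]
      exact inv_mul_cancel₀ hTC
  have hbar_tr : ∀ l, (Rbar l).trace = 1 := fun l => (hbar l).2
  -- key linearity lemma: utility of (update Rbar m σm) is the time-average
  have key : ∀ (m : Fin k) (σm : Matrix (Fin (n m)) (Fin (n m)) ℂ), σm.trace = 1 →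
      uPoly E R m (prodProfile (Function.update Rbar m σm))
        = (1 / (T : ℝ)) * ∑ t, uPoly E R m (prodProfile (Function.update (ρ t) m σm)) := by
    intro m σm hσm
    have htr1 : ∀ l, ((Function.update Rbar m σm) l).trace = 1 := by
      intro l
      by_cases hl : l = m
      · subst hl; rw [Function.update_self]; exact hσm
      · rw [Function.update_of_ne hl]; exact hbar_tr l
    have htr2 : ∀ t l, ((Function.update (ρ t) m σm) l).trace = 1 := by
      intro t l
      by_cases hl : l = m
      · subst hl; rw [Function.update_self]; exact hσm
      · rw [Function.update_of_ne hl]; exact (hρ t l).2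
    rw [uPoly_prodProfile E hE R m _ htr1]
    have hrhs : ∀ t, uPoly E R m (prodProfile (Function.update (ρ t) m σm))
        = ∑ j ∈ Finset.univ.filter (fun j => (m, j) ∈ E),
            ((R m j * Matrix.of (fun (ab a'b' : Fin (n m) × Fin (n j)) =>
              σm ab.1 a'b'.1 * ρ t j ab.2 a'b'.2)).trace).re := by
      intro t
      rw [uPoly_prodProfile E hE R m _ (htr2 t)]
      refine Finset.sum_congr rfl fun j hj => ?_
      have hmj : m ≠ j := hE (m, j) (Finset.mem_filter.mp hj).2
      have : (Matrix.of fun (ab a'b' : Fin (n m) × Fin (n j)) =>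
            (Function.update (ρ t) m σm) m ab.1 a'b'.1 *
              (Function.update (ρ t) m σm) j ab.2 a'b'.2)
          = Matrix.of (fun (ab a'b' : Fin (n m) × Fin (n j)) =>
            σm ab.1 a'b'.1 * ρ t j ab.2 a'b'.2) := by
        funext ab a'b'
        rw [Matrix.of_apply, Matrix.of_apply, Function.update_self,
          Function.update_of_ne (Ne.symm hmj)]
      rw [this]
    rw [Finset.sum_congr rfl fun t _ => hrhs t, Finset.sum_comm, Finset.mul_sum]
    refine Finset.sum_congr rfl fun j hj => ?_
    have hmj : m ≠ j := hE (m, j) (Finset.mem_filter.mp hj).2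
    have hof : (Matrix.of fun (ab a'b' : Fin (n m) × Fin (n j)) =>
          (Function.update Rbar m σm) m ab.1 a'b'.1 *
            (Function.update Rbar m σm) j ab.2 a'b'.2)
        = Matrix.of (fun (ab a'b' : Fin (n m) × Fin (n j)) =>
            σm ab.1 a'b'.1 * ((1 / (T : ℂ)) • ∑ t, ρ t j) ab.2 a'b'.2) := by
      funext ab a'b'
      rw [Matrix.of_apply, Matrix.of_apply, Function.update_self,
        Function.update_of_ne (Ne.symm hmj), hRbar]
    rw [hof, trace_kron_avg, hcast, Complex.re_ofReal_mul, Complex.re_sum]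
  -- densities of product profiles
  have hdens_t : ∀ t, IsDensity (prodProfile (ρ t)) :=
    fun t => isDensity_prodProfile (fun l => hρ t l)
  have hdens_bar : IsDensity (prodProfile Rbar) := isDensity_prodProfile hbar
  -- average payoffs
  set A : Fin k → ℝ := fun m => (1 / (T : ℝ)) * ∑ t, uPoly E R m (prodProfile (ρ t))
    with hA
  have hsumA : ∑ m, A m = 0 := by
    have : ∑ m, A m = (1 / (T : ℝ)) * ∑ t, ∑ m, uPoly E R m (prodProfile (ρ t)) := by
      rw [hA, ← Finset.mul_sum, Finset.sum_comm]
    rw [this, Finset.sum_congr rfl fun t _ => hzero _ (hdens_t t)]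
    simp
  have H1 : uPoly E R i (prodProfile (Function.update Rbar i ρ')) ≤ A i + ε := by
    rw [key i ρ' hρ'.2]
    exact hreg i ρ' hρ'
  have Hm : ∀ m, uPoly E R m (prodProfile Rbar) ≤ A m + ε := by
    intro m
    have h2 := key m (Rbar m) (hbar_tr m)
    rw [Function.update_eq_self] at h2
    rw [h2]
    exact hreg m (Rbar m) (hbar m)
  have Hzbar : ∑ m, uPoly E R m (prodProfile Rbar) = 0 := hzero _ hdens_bar
  -- combine
  have hAi : A i + ∑ m ∈ Finset.univ.erase i, A m = 0 := by
    rw [Finset.add_sum_erase _ _ (Finset.mem_univ i)]; exact hsumA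
  have hui : uPoly E R i (prodProfile Rbar)
      + ∑ m ∈ Finset.univ.erase i, uPoly E R m (prodProfile Rbar) = 0 := by
    rw [Finset.add_sum_erase _ (fun m => uPoly E R m (prodProfile Rbar))
      (Finset.mem_univ i)]
    exact Hzbar
  have hcard : ((Finset.univ.erase i).card : ℝ) = (k : ℝ) - 1 := by
    rw [Finset.card_erase_of_mem (Finset.mem_univ i)]
    simp only [Finset.card_univ, Fintype.card_fin]
    have hk : 1 ≤ k := i.pos
    push_cast [Nat.cast_sub hk]
    ring
  have hbound : ∑ m ∈ Finset.univ.erase i, (uPoly E R m (prodProfile Rbar) - ε)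
      ≤ ∑ m ∈ Finset.univ.erase i, A m :=
    Finset.sum_le_sum fun m _ => by linarith [Hm m]
  rw [Finset.sum_sub_distrib, Finset.sum_const, nsmul_eq_mul, hcard] at hbound
  linarith [H1, hAi, hui, hbound]
end
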